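/- Let d, s, r ≥ 1 and let E be a channel on M_s with Kraus operators E_1, …, E_r. Then the following are equivalent: (A) there exist a subchannel S from M_d to M_s, a subchannel R from M_s to M_d, and a real p > 0 such that R(E(S(X))) = p·X for all X ∈ M_d; (B) there exist a finite family (S_k)_{k∈K} of s×d complex matrices with Σ_k S_k* S_k ≤ I_d, a positive semidefinite R ∈ M_s with R ≤ I_s, a nonempty finite family (A_j)_{j∈J} of s×d complex matrices, and positive reals (α_j)_{j∈J} such that A_j* A_j = α_j·I_d for every j, A_j* A_i = 0 for all i ≠ j in J, and Σ_{i∈{1,…,r}, k∈K} √R E_i S_k X S_k* E_i* √R = Σ_{j∈J} A_j X A_j* for all X ∈ M_d, where √R is the positive semidefinite square root of R. -/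

import Mathlib

open Matrix Kronecker BigOperators
open scoped ComplexOrder

noncomputable section

/-- `Mat n` is the space of `n × n` complex matrices. -/
abbrev Mat (n : ℕ) := Matrix (Fin n) (Fin n) ℂ

/-- A subchannel from `M_n` to `M_m`: a map of Kraus form whose Kraus operators satisfy
`∑ Kᴴ K ≤ 1` in the Loewner order. -/
def IsSubchannel {n m : Type} [Fintype n] [DecidableEq n] [Fintype m]
    (Φ : Matrix n n ℂ → Matrix m m ℂ) : Prop :=
  ∃ (k : ℕ) (K : Fin k → Matrix m n ℂ),
    (∀ X, Φ X = ∑ i, K i * X * (K i)ᴴ) ∧ (1 - ∑ i, (K i)ᴴ * K i).PosSemidef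

/-- A channel from `M_n` to `M_m`: a map of Kraus form with `∑ Kᴴ K = 1`. -/
def IsChannel {n m : Type} [Fintype n] [DecidableEq n] [Fintype m]
    (Φ : Matrix n n ℂ → Matrix m m ℂ) : Prop :=
  ∃ (k : ℕ) (K : Fin k → Matrix m n ℂ),
    (∀ X, Φ X = ∑ i, K i * X * (K i)ᴴ) ∧ (∑ i, (K i)ᴴ * K i) = 1

/-- `E` is probabilistically correctable for `ℂ^d`. -/
def ProbCorrectable (d : ℕ) {s : ℕ} (E : Mat s → Mat s) : Prop :=
  ∃ (S : Mat d → Mat s) (R : Mat s → Mat d) (p : ℝ),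
    IsSubchannel S ∧ IsSubchannel R ∧ 0 < p ∧ ∀ X, R (E (S X)) = (p : ℂ) • X

/-- `E` is perfectly correctable for `ℂ^d`. -/
def PerfCorrectable (d : ℕ) {s : ℕ} (E : Mat s → Mat s) : Prop :=
  ∃ (S : Mat d → Mat s) (R : Mat s → Mat d),
    IsSubchannel S ∧ IsSubchannel R ∧ ∀ X, R (E (S X)) = X

/-- The Choi matrix of a map on `M_s`. -/
def choi {s : ℕ} (Φ : Mat s → Mat s) : Matrix (Fin s × Fin s) (Fin s × Fin s) ℂ :=
  ∑ i : Fin s, ∑ j : Fin s, (Φ (single i j 1)) ⊗ₖ (single i j 1)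

/-- `rP d s`: the largest `r` such that every channel on `M_s` with Choi rank at most `r`
is probabilistically correctable for `ℂ^d`. -/
def rP (d s : ℕ) : ℕ :=
  sSup {r : ℕ | ∀ E : Mat s → Mat s, IsChannel E → (choi E).rank ≤ r → ProbCorrectable d E}

/-- `rP1 d s`: the largest `r` such that every channel on `M_s` with Choi rank at most `r`
is perfectly correctable for `ℂ^d`. -/
def rP1 (d s : ℕ) : ℕ :=
  sSup {r : ℕ | ∀ E : Mat s → Mat s, IsChannel E → (choi E).rank ≤ r → PerfCorrectable d E}

/-- The square root of a positive semidefinite matrix, as defined in Mathlib of December 2024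
(`Matrix.PosSemidef.sqrt`, since removed from Mathlib). -/
def Matrix.PosSemidef.sqrt {n 𝕜 : Type*} [Fintype n] [DecidableEq n] [RCLike 𝕜]
    {A : Matrix n n 𝕜} (hA : A.PosSemidef) : Matrix n n 𝕜 :=
  (hA.1.eigenvectorUnitary : Matrix n n 𝕜) * diagonal ((↑) ∘ Real.sqrt ∘ hA.1.eigenvalues) *
    (star (hA.1.eigenvectorUnitary : Matrix n n 𝕜))

lemma Matrix.PosSemidef.sqrt_mul_self {n 𝕜 : Type*} [Fintype n] [DecidableEq n] [RCLike 𝕜]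
    {A : Matrix n n 𝕜} (hA : A.PosSemidef) : hA.sqrt * hA.sqrt = A := by
  unfold Matrix.PosSemidef.sqrt
  have hU : star (hA.1.eigenvectorUnitary : Matrix n n 𝕜) *
      (hA.1.eigenvectorUnitary : Matrix n n 𝕜) = 1 := Unitary.coe_star_mul_self _
  have hD : diagonal ((↑) ∘ Real.sqrt ∘ hA.1.eigenvalues) *
      diagonal ((↑) ∘ Real.sqrt ∘ hA.1.eigenvalues)
        = (diagonal (RCLike.ofReal ∘ hA.1.eigenvalues) : Matrix n n 𝕜) := by
    rw [diagonal_mul_diagonal]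
    congr 1
    funext i
    simp only [Function.comp_apply]
    rw [← RCLike.ofReal_mul, Real.mul_self_sqrt (hA.eigenvalues_nonneg i)]
  calc _ = (hA.1.eigenvectorUnitary : Matrix n n 𝕜) *
        (diagonal ((↑) ∘ Real.sqrt ∘ hA.1.eigenvalues) *
          (star (hA.1.eigenvectorUnitary : Matrix n n 𝕜) *
            (hA.1.eigenvectorUnitary : Matrix n n 𝕜)) *
          diagonal ((↑) ∘ Real.sqrt ∘ hA.1.eigenvalues)) *
        star (hA.1.eigenvectorUnitary : Matrix n n 𝕜) := by
        simp only [Matrix.mul_assoc]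
    _ = A := by
        rw [hU, Matrix.mul_one, hD]
        exact hA.1.spectral_theorem.symm

lemma Matrix.PosSemidef.posSemidef_sqrt {n 𝕜 : Type*} [Fintype n] [DecidableEq n] [RCLike 𝕜]
    {A : Matrix n n 𝕜} (hA : A.PosSemidef) : hA.sqrt.PosSemidef := by
  unfold Matrix.PosSemidef.sqrt
  have hdiag : (diagonal ((↑) ∘ Real.sqrt ∘ hA.1.eigenvalues) : Matrix n n 𝕜).PosSemidef := by
    refine Matrix.PosSemidef.diagonal fun i => ?_
    simp only [Function.comp_apply, Pi.zero_apply]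
    exact RCLike.ofReal_nonneg.mpr (Real.sqrt_nonneg _)
  have := hdiag.mul_mul_conjTranspose_same (hA.1.eigenvectorUnitary : Matrix n n 𝕜)
  rwa [← Matrix.star_eq_conjTranspose] at this

/-! ### Auxiliary lemmas -/

lemma sum_mul_conj_eq_zero {ι : Type} [Fintype ι] (f : ι → ℂ)
    (h : ∑ m, f m * (starRingEnd ℂ) (f m) = 0) (m : ι) : f m = 0 := by
  have h' : ∑ m, (Complex.normSq (f m) : ℂ) = 0 := by
    simpa [Complex.mul_conj] using h
  have h'' : ∑ m, Complex.normSq (f m) = 0 := by exact_mod_cast h'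
  have := (Finset.sum_eq_zero_iff_of_nonneg
    (fun i _ => Complex.normSq_nonneg (f i))).mp h'' m (Finset.mem_univ m)
  exact Complex.normSq_eq_zero.mp this

lemma sum_rankone_eq_rankone {ι κ : Type} [Fintype ι] [Fintype κ]
    (v : ι → κ → ℂ) (w : κ → ℂ) (p : ℝ)
    (H : ∀ x y : κ, ∑ m, v m x * (starRingEnd ℂ) (v m y)
        = (p : ℂ) * (w x * (starRingEnd ℂ) (w y)))
    (m0 : ι) : ∃ c : ℂ, ∀ x, v m0 x = c * w x := by
  by_cases ha : (∑ x, w x * (starRingEnd ℂ) (w x)) = 0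
  · refine ⟨0, fun x => ?_⟩
    have hw : w x = 0 := sum_mul_conj_eq_zero w ha x
    have hx : ∑ m, v m x * (starRingEnd ℂ) (v m x) = 0 := by
      rw [H x x, hw]; ring
    simpa using sum_mul_conj_eq_zero (fun m => v m x) hx m0
  · set cj := starRingEnd ℂ with hcj
    set a : ℂ := ∑ x, w x * cj (w x) with hadef
    set b : ℂ := ∑ x, v m0 x * cj (w x) with hbdef
    set u : κ → ℂ := fun x => a * v m0 x - b * w x with hu
    have h1 : ∑ y, u y * cj (w y) = 0 := by
      have e : ∑ y, u y * cj (w y)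
          = a * (∑ y, v m0 y * cj (w y)) - b * (∑ y, w y * cj (w y)) := by
        rw [Finset.mul_sum, Finset.mul_sum, ← Finset.sum_sub_distrib]
        exact Finset.sum_congr rfl fun y _ => by simp [hu]; ring
      rw [e, ← hadef, ← hbdef]; ring
    have h3 : ∑ y, cj (u y) * w y = 0 := by
      have := congrArg cj h1
      simpa [hcj, map_sum] using this
    have hbig : ∑ m, (∑ x, cj (u x) * v m x) * cj (∑ x, cj (u x) * v m x) = 0 := by
      have e1 : ∀ m, cj (∑ x, cj (u x) * v m x) = ∑ y, u y * cj (v m y) := by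
        intro m; simp [hcj, map_sum]
      calc ∑ m, (∑ x, cj (u x) * v m x) * cj (∑ x, cj (u x) * v m x)
          = ∑ m, ∑ x, ∑ y, (cj (u x) * u y) * (v m x * cj (v m y)) := by
            refine Finset.sum_congr rfl fun m _ => ?_
            rw [e1 m, Finset.sum_mul_sum]
            exact Finset.sum_congr rfl fun x _ =>
              Finset.sum_congr rfl fun y _ => by ring
        _ = ∑ x, ∑ y, (cj (u x) * u y) * (∑ m, v m x * cj (v m y)) := by
            rw [Finset.sum_comm]
            refine Finset.sum_congr rfl fun x _ => ?_
            rw [Finset.sum_comm]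
            exact Finset.sum_congr rfl fun y _ => (Finset.mul_sum _ _ _).symm
        _ = ∑ x, ∑ y, (cj (u x) * w x) * ((p:ℂ) * (u y * cj (w y))) := by
            refine Finset.sum_congr rfl fun x _ => Finset.sum_congr rfl fun y _ => ?_
            rw [H x y]; ring
        _ = (∑ x, cj (u x) * w x) * ((p:ℂ) * (∑ y, u y * cj (w y))) := by
            simp only [Finset.sum_mul, Finset.mul_sum]
            rw [Finset.sum_comm]
        _ = 0 := by rw [h1]; ring
    have hs0 : ∑ x, cj (u x) * v m0 x = 0 :=
      sum_mul_conj_eq_zero (fun m => ∑ x, cj (u x) * v m x) hbig m0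
    have h4 : ∑ x, cj (u x) * u x = 0 := by
      have e : ∑ x, cj (u x) * u x
          = a * (∑ x, cj (u x) * v m0 x) - b * (∑ x, cj (u x) * w x) := by
        rw [Finset.mul_sum, Finset.mul_sum, ← Finset.sum_sub_distrib]
        exact Finset.sum_congr rfl fun x _ => by simp only [hu]; ring
      rw [e, hs0, h3]; ring
    have hu0 : ∀ x, u x = 0 := by
      intro x
      refine sum_mul_conj_eq_zero u ?_ x
      rw [← h4]
      exact Finset.sum_congr rfl fun x _ => by ring
    refine ⟨a⁻¹ * b, fun x => ?_⟩
    have := hu0 x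
    simp only [hu, sub_eq_zero] at this
    field_simp
    linear_combination this

lemma kraus_of_scalar_map {d : ℕ} {ι : Type} [Fintype ι]
    (B : ι → Matrix (Fin d) (Fin d) ℂ) (p : ℝ)
    (H : ∀ X : Matrix (Fin d) (Fin d) ℂ, ∑ m, B m * X * (B m)ᴴ = (p : ℂ) • X) :
    ∀ m, ∃ c : ℂ, B m = c • (1 : Matrix (Fin d) (Fin d) ℂ) := by
  have entry : ∀ (M N : Matrix (Fin d) (Fin d) ℂ) (a b u v : Fin d),
      (M * single a b (1:ℂ) * Nᴴ) u v = M u a * (starRingEnd ℂ) (N v b) := by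
    intro M N a b u v
    simp [Matrix.mul_apply, Matrix.single, Matrix.conjTranspose_apply, ite_and,
      Finset.mul_sum, mul_ite, ite_mul]
  have H' : ∀ x y : Fin d × Fin d,
      ∑ m, B m x.1 x.2 * (starRingEnd ℂ) (B m y.1 y.2)
        = (p:ℂ) * ((1 : Matrix (Fin d) (Fin d) ℂ) x.1 x.2 *
            (starRingEnd ℂ) ((1 : Matrix (Fin d) (Fin d) ℂ) y.1 y.2)) := by
    rintro ⟨u, a⟩ ⟨v, b⟩
    have h0 := congrFun (congrFun (H (single a b (1:ℂ))) u) v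
    rw [Matrix.sum_apply] at h0
    simp only [entry] at h0
    rw [h0]
    simp only [Matrix.smul_apply, Matrix.one_apply, smul_eq_mul, Matrix.single,
      Matrix.of_apply, ite_and, apply_ite (starRingEnd ℂ), _root_.map_one, _root_.map_zero]
    by_cases h1 : u = a
    · subst h1
      by_cases h2 : v = b
      · subst h2; simp
      · simp [h2, Ne.symm h2]
    · by_cases h2 : v = b
      · subst h2; simp [h1, Ne.symm h1]
      · simp [h1, h2, Ne.symm h1, Ne.symm h2]
  intro m
  obtain ⟨c, hc⟩ := sum_rankone_eq_rankone (fun m (x : Fin d × Fin d) => B m x.1 x.2)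
    (fun x : Fin d × Fin d => (1 : Matrix (Fin d) (Fin d) ℂ) x.1 x.2) p H' m
  refine ⟨c, ?_⟩
  ext u v
  simpa [Matrix.one_apply] using hc (u, v)

lemma posSemidef_sum {ι : Type} [Fintype ι] {n : Type} [Fintype n] [DecidableEq n]
    (f : ι → Matrix n n ℂ) (h : ∀ i, (f i).PosSemidef) :
    (∑ i, f i).PosSemidef := by
  classical
  exact Finset.sum_induction f _ (fun a b ha hb => ha.add hb) Matrix.PosSemidef.zero
    (fun i _ => h i)

lemma posSemidef_smul_real {n : Type} [Fintype n] {A : Matrix n n ℂ} (hA : A.PosSemidef)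
    {c : ℝ} (hc : 0 ≤ c) : ((c:ℂ) • A).PosSemidef := by
  exact hA.smul (a := (c:ℂ)) (by exact_mod_cast hc)

lemma shrink_aux {d s : ℕ} (A : Matrix (Fin s) (Fin d) ℂ) (α : ℝ) (hα : 0 ≤ α)
    (h : Aᴴ * A = (α:ℂ) • 1) :
    ((α:ℂ) • (1 : Matrix (Fin s) (Fin s) ℂ) - A * Aᴴ).PosSemidef := by
  rcases eq_or_lt_of_le hα with h0 | hpos
  · have hA0 : A = 0 := by
      rw [← Matrix.conjTranspose_mul_self_eq_zero (A := A), h, ← h0]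
      simp
    rw [hA0, ← h0]
    simpa using Matrix.PosSemidef.zero
  · set Q : Matrix (Fin s) (Fin s) ℂ := (α:ℂ) • 1 - A * Aᴴ with hQ
    have hherm : Qᴴ = Q := by
      rw [hQ, Matrix.conjTranspose_sub, Matrix.conjTranspose_smul,
        Matrix.conjTranspose_mul, Matrix.conjTranspose_conjTranspose,
        Matrix.conjTranspose_one, Complex.star_def, Complex.conj_ofReal]
    have hsq : Q * Q = (α:ℂ) • Q := by
      have hAA : A * Aᴴ * (A * Aᴴ) = (α:ℂ) • (A * Aᴴ) := by
        calc A * Aᴴ * (A * Aᴴ) = A * (Aᴴ * A) * Aᴴ := by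
              simp only [Matrix.mul_assoc]
          _ = (α:ℂ) • (A * Aᴴ) := by
              rw [h, Matrix.mul_smul, Matrix.mul_one, Matrix.smul_mul]
      rw [hQ]
      simp only [sub_mul, mul_sub, smul_mul_assoc, mul_smul_comm, one_mul, mul_one,
        hAA, smul_sub, smul_smul]
      abel
    have hQeq : Q = (Complex.ofReal (α⁻¹)) • (Qᴴ * Q) := by
      rw [hherm, hsq, smul_smul]
      norm_cast
      rw [inv_mul_cancel₀ (ne_of_gt hpos)]
      simp
    rw [hQeq]
    exact posSemidef_smul_real (Matrix.posSemidef_conjTranspose_mul_self Q)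
      (le_of_lt (inv_pos.mpr hpos))

/-- Theorem 1 (A) ⟺ (B). -/
theorem stmt_1 (d s r : ℕ) (hd : 1 ≤ d) (hs : 1 ≤ s) (hr : 1 ≤ r)
    (E : Mat s → Mat s) (Ek : Fin r → Mat s)
    (hEk : ∀ X, E X = ∑ i, Ek i * X * (Ek i)ᴴ)
    (hTP : ∑ i, (Ek i)ᴴ * Ek i = 1) :
    ProbCorrectable d E ↔
      ∃ (kS : ℕ) (S : Fin kS → Matrix (Fin s) (Fin d) ℂ),
        (1 - ∑ k, (S k)ᴴ * S k).PosSemidef ∧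
        ∃ (R : Mat s) (hR : R.PosSemidef),
          (1 - R).PosSemidef ∧
          ∃ (J : ℕ), 0 < J ∧
            ∃ (A : Fin J → Matrix (Fin s) (Fin d) ℂ) (α : Fin J → ℝ),
              (∀ j, 0 < α j) ∧
              (∀ j, (A j)ᴴ * A j = (α j : ℂ) • (1 : Mat d)) ∧
              (∀ i j, i ≠ j → (A j)ᴴ * A i = 0) ∧
              ∀ X : Mat d,
                ∑ i : Fin r, ∑ k : Fin kS,
                    hR.sqrt * Ek i * S k * X * (S k)ᴴ * (Ek i)ᴴ * hR.sqrt
                  = ∑ j, A j * X * (A j)ᴴ := by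
  constructor
  · -- (A) → (B)
    rintro ⟨Smap, Rmap, p, ⟨kS, S, hSf, hS⟩, ⟨kR, Rk, hRf, hRkPSD⟩, hp, hcorr⟩
    classical
    refine ⟨kS, S, hS, ?_⟩
    set Rm : Mat s := ∑ l, (Rk l)ᴴ * Rk l with hRm
    have hRmPSD : Rm.PosSemidef :=
      posSemidef_sum _ fun l => Matrix.posSemidef_conjTranspose_mul_self _
    set q := hRmPSD.sqrt with hq
    have hqq : q * q = Rm := hRmPSD.sqrt_mul_self
    have hqH : qᴴ = q := hRmPSD.posSemidef_sqrt.1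
    set B : Fin kR × Fin r × Fin kS → Mat d :=
      fun m => Rk m.1 * (Ek m.2.1 * S m.2.2) with hB
    have Hcomp : ∀ X : Mat d, ∑ m, B m * X * (B m)ᴴ = (p:ℂ) • X := by
      intro X
      rw [← hcorr X, hSf, hEk, hRf]
      simp only [hB, Matrix.mul_sum, Matrix.sum_mul, Matrix.conjTranspose_mul,
        Matrix.mul_assoc, Fintype.sum_prod_type]
    choose c hcB using kraus_of_scalar_map B p Hcomp
    have i0 : Fin d := ⟨0, hd⟩
    have hcp : ∑ m, Complex.normSq (c m) = p := by
      have h1 := Hcomp 1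
      have h2 : ∀ m, B m * 1 * (B m)ᴴ
          = (c m * (starRingEnd ℂ) (c m)) • (1 : Mat d) := by
        intro m
        rw [hcB m, Matrix.mul_one, Matrix.conjTranspose_smul, Matrix.conjTranspose_one,
          Matrix.smul_mul, Matrix.mul_smul, Matrix.one_mul, smul_smul, Complex.star_def]
      rw [Finset.sum_congr rfl (fun m _ => h2 m)] at h1
      have h3 := congrFun (congrFun h1 i0) i0
      rw [Matrix.sum_apply] at h3
      simp only [Matrix.smul_apply, Matrix.one_apply_eq, smul_eq_mul, mul_one,
        Complex.mul_conj] at h3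
      exact_mod_cast h3
    set F : Fin r × Fin kS → Matrix (Fin s) (Fin d) ℂ :=
      fun m => Ek m.1 * S m.2 with hF
    set C : Matrix (Fin kR) (Fin r × Fin kS) ℂ :=
      Matrix.of (fun l m => c (l, m.1, m.2)) with hC
    set g := Cᴴ * C with hgdef
    have hgapp : ∀ m' m, g m' m
        = ∑ l, (starRingEnd ℂ) (c (l, m'.1, m'.2)) * c (l, m.1, m.2) := by
      intro m' m
      simp [hgdef, Matrix.mul_apply, Matrix.conjTranspose_apply, hC, Complex.star_def]
    have hRkF : ∀ l (m : Fin r × Fin kS), Rk l * F m = c (l, m.1, m.2) • 1 := by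
      intro l m
      exact hcB (l, m.1, m.2)
    have hFRF : ∀ m' m : Fin r × Fin kS, (F m')ᴴ * Rm * F m = g m' m • 1 := by
      intro m' m
      calc (F m')ᴴ * Rm * F m = ∑ l, (Rk l * F m')ᴴ * (Rk l * F m) := by
            rw [hRm, Matrix.mul_sum, Matrix.sum_mul]
            refine Finset.sum_congr rfl fun l _ => ?_
            simp only [hF, Matrix.conjTranspose_mul, Matrix.mul_assoc]
        _ = ∑ l, ((starRingEnd ℂ) (c (l, m'.1, m'.2)) * c (l, m.1, m.2)) • 1 := by
            refine Finset.sum_congr rfl fun l _ => ?_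
            rw [hRkF, hRkF, Matrix.conjTranspose_smul, Matrix.conjTranspose_one,
              Matrix.smul_mul, Matrix.mul_smul, Matrix.one_mul, smul_smul,
              Complex.star_def]
        _ = g m' m • 1 := by rw [hgapp, Finset.sum_smul]
    have hGram : ∀ m' m : Fin r × Fin kS,
        (q * F m')ᴴ * (q * F m) = g m' m • 1 := by
      intro m' m
      rw [Matrix.conjTranspose_mul, hqH, Matrix.mul_assoc,
        ← Matrix.mul_assoc q q (F m), hqq, ← Matrix.mul_assoc]
      exact hFRF m' m
    have hgPSD : g.PosSemidef := Matrix.posSemidef_conjTranspose_mul_self C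
    have hgH : g.IsHermitian := hgPSD.1
    set U : Matrix (Fin r × Fin kS) (Fin r × Fin kS) ℂ :=
      (Matrix.IsHermitian.eigenvectorUnitary hgH : Matrix (Fin r × Fin kS) (Fin r × Fin kS) ℂ)
      with hU
    set ev : Fin r × Fin kS → ℝ := hgH.eigenvalues with hev
    have hdiag : star U * g * U = Matrix.diagonal (RCLike.ofReal ∘ ev) :=
      by
        have := hgH.conjStarAlgAut_star_eigenvectorUnitary
        rw [Unitary.conjStarAlgAut_star_apply] at this
        exact this
    have hUU : U * star U = 1 :=
      Matrix.mem_unitaryGroup_iff.mp (Matrix.IsHermitian.eigenvectorUnitary hgH).2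
    set Afull : Fin r × Fin kS → Matrix (Fin s) (Fin d) ℂ :=
      fun j => ∑ m, U m j • (q * F m) with hAfull
    have key1 : ∀ j' j, (Afull j')ᴴ * Afull j
        = ((Matrix.diagonal (RCLike.ofReal ∘ ev) :
            Matrix (Fin r × Fin kS) (Fin r × Fin kS) ℂ) j' j) • (1 : Mat d) := by
      intro j' j
      have expand : (Afull j')ᴴ * Afull j
          = ∑ m', ∑ m, ((starRingEnd ℂ) (U m' j') * g m' m * U m j) • (1 : Mat d) := by
        rw [hAfull]
        rw [Matrix.conjTranspose_sum, Matrix.sum_mul]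
        refine Finset.sum_congr rfl fun m' _ => ?_
        rw [Matrix.mul_sum]
        refine Finset.sum_congr rfl fun m _ => ?_
        rw [Matrix.conjTranspose_smul, Matrix.smul_mul, Matrix.mul_smul, smul_smul,
          hGram m' m, smul_smul, Complex.star_def]
        congr 1
        ring
      rw [expand, ← hdiag]
      have : ∀ m' : Fin r × Fin kS,
          ∑ m, ((starRingEnd ℂ) (U m' j') * g m' m * U m j) • (1 : Mat d)
          = ((starRingEnd ℂ) (U m' j') * (g * U) m' j) • (1 : Mat d) := by
        intro m'
        rw [Matrix.mul_apply, Finset.mul_sum, ← Finset.sum_smul]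
        congr 1
        exact Finset.sum_congr rfl fun m _ => by ring
      rw [Finset.sum_congr rfl fun m' _ => this m', ← Finset.sum_smul]
      congr 1
      simp only [Matrix.mul_assoc, Matrix.mul_apply, Matrix.star_apply, Complex.star_def,
        Finset.mul_sum, Finset.sum_mul]
      rw [Finset.sum_comm]
      exact Finset.sum_congr rfl fun m1 _ => Finset.sum_congr rfl fun m2 _ => by ring
    have key2 : ∀ X : Mat d, ∑ j, Afull j * X * (Afull j)ᴴ
        = ∑ m, (q * F m) * X * (q * F m)ᴴ := by
      intro X
      have expand : ∀ j, Afull j * X * (Afull j)ᴴ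
          = ∑ m, ∑ m', (U m j * (starRingEnd ℂ) (U m' j)) •
              ((q * F m) * X * (q * F m')ᴴ) := by
        intro j
        rw [hAfull]
        rw [Matrix.conjTranspose_sum, Matrix.sum_mul, Matrix.sum_mul]
        refine Finset.sum_congr rfl fun m _ => ?_
        rw [Matrix.mul_sum]
        refine Finset.sum_congr rfl fun m' _ => ?_
        rw [Matrix.conjTranspose_smul, Matrix.smul_mul, Matrix.smul_mul, Matrix.mul_smul,
          smul_smul, Complex.star_def]
      calc ∑ j, Afull j * X * (Afull j)ᴴ
          = ∑ m, ∑ m', ((U * star U) m m') • ((q * F m) * X * (q * F m')ᴴ) := by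
            rw [Finset.sum_congr rfl fun j (_ : j ∈ Finset.univ) => expand j]
            rw [Finset.sum_comm]
            refine Finset.sum_congr rfl fun m _ => ?_
            rw [Finset.sum_comm]
            refine Finset.sum_congr rfl fun m' _ => ?_
            rw [← Finset.sum_smul]
            congr 1
            try simp only [Matrix.mul_apply, Matrix.star_apply, Complex.star_def]
        _ = ∑ m, (q * F m) * X * (q * F m)ᴴ := by
            rw [hUU]
            refine Finset.sum_congr rfl fun m _ => ?_
            simp [Matrix.one_apply, ite_smul]
    have hevnn : ∀ j, 0 ≤ ev j := fun j => hgPSD.eigenvalues_nonneg j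
    set T : Finset (Fin r × Fin kS) := Finset.univ.filter (fun j => 0 < ev j) with hT
    have hmemT : ∀ j, j ∈ T ↔ 0 < ev j := by
      intro j; rw [hT]; simp
    have hAzero : ∀ j ∉ T, Afull j = 0 := by
      intro j hj
      have hev0 : ev j = 0 := by
        rcases (hevnn j).lt_or_eq with h | h
        · exact absurd ((hmemT j).mpr h) hj
        · exact h.symm
      have h2 := key1 j j
      rw [Matrix.diagonal_apply_eq] at h2
      simp only [Function.comp_apply, hev0] at h2
      rw [← Matrix.conjTranspose_mul_self_eq_zero (A := Afull j), h2]
      simp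
    have hTne : T.Nonempty := by
      by_contra hcon
      rw [Finset.not_nonempty_iff_eq_empty] at hcon
      have hevz : ∀ j, ev j = 0 := by
        intro j
        rcases (hevnn j).lt_or_eq with h | h
        · exact absurd ((hmemT j).mpr h) (by rw [hcon]; exact Finset.notMem_empty j)
        · exact h.symm
      have hg0 : g = 0 := by
        have hspec := hgH.spectral_theorem
        have hdz : (Matrix.diagonal (RCLike.ofReal ∘ ev) :
            Matrix (Fin r × Fin kS) (Fin r × Fin kS) ℂ) = 0 := by
          ext i j
          by_cases hij : i = j
          · subst hij; simp [Matrix.diagonal_apply_eq, hevz]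
          · simp [Matrix.diagonal_apply_ne _ hij]
        rw [hev] at hdz
        rw [hspec, hdz]
        simp
      have hc0 : ∀ m : Fin kR × Fin r × Fin kS, c m = 0 := by
        rintro ⟨l, ik⟩
        have h1 : g ik ik = 0 := by rw [hg0]; rfl
        rw [hgapp] at h1
        have h1' : ∑ l', c (l', ik.1, ik.2) * (starRingEnd ℂ) (c (l', ik.1, ik.2)) = 0 := by
          rw [← h1]
          exact Finset.sum_congr rfl fun l' _ => by ring
        exact sum_mul_conj_eq_zero (fun l' => c (l', ik.1, ik.2)) h1' l
      have : p = 0 := by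
        rw [← hcp]
        exact Finset.sum_eq_zero fun m _ => by rw [hc0 m]; simp
      exact absurd this (ne_of_gt hp)
    refine ⟨Rm, hRmPSD, hRkPSD, T.card, Finset.card_pos.mpr hTne,
      fun t => Afull (T.equivFin.symm t), fun t => ev (T.equivFin.symm t), ?_, ?_, ?_, ?_⟩
    · intro t
      exact (hmemT _).mp (T.equivFin.symm t).2
    · intro t
      have := key1 (T.equivFin.symm t) (T.equivFin.symm t)
      rw [Matrix.diagonal_apply_eq] at this
      exact this
    · intro i j hij
      have hne : ((T.equivFin.symm j : _) : Fin r × Fin kS)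
          ≠ ((T.equivFin.symm i : _) : Fin r × Fin kS) :=
        Subtype.coe_injective.ne (T.equivFin.symm.injective.ne (Ne.symm hij))
      have := key1 (T.equivFin.symm j) (T.equivFin.symm i)
      rw [Matrix.diagonal_apply_ne _ hne] at this
      simpa using this
    · intro X
      have e1 : ∑ t : Fin T.card, Afull (T.equivFin.symm t) * X * (Afull (T.equivFin.symm t))ᴴ
          = ∑ j ∈ T, Afull j * X * (Afull j)ᴴ := by
        rw [← Finset.sum_coe_sort T (fun j => Afull j * X * (Afull j)ᴴ)]
        exact Equiv.sum_comp T.equivFin.symm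
          (fun i : {x // x ∈ T} => Afull ↑i * X * (Afull ↑i)ᴴ)
      have e2 : ∑ j ∈ T, Afull j * X * (Afull j)ᴴ
          = ∑ j, Afull j * X * (Afull j)ᴴ := by
        refine Finset.sum_subset (Finset.subset_univ T) ?_
        intro j _ hj
        rw [hAzero j hj]
        simp
      rw [e1, e2, key2 X, Fintype.sum_prod_type]
      refine Finset.sum_congr rfl fun i _ => Finset.sum_congr rfl fun k _ => ?_
      simp only [hF, Matrix.conjTranspose_mul, hqH, Matrix.mul_assoc]
      rfl
  · -- (B) → (A)
    rintro ⟨kS, S, hS, R, hR, hR1, J, hJ, A, α, hαpos, hAA, horth, hsum⟩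
    have hJne : Nonempty (Fin J) := ⟨⟨0, hJ⟩⟩
    set q := hR.sqrt with hq
    have hqq : q * q = R := hR.sqrt_mul_self
    have hqH : qᴴ = q := hR.posSemidef_sqrt.1
    set t : ℝ := ∑ j, α j with ht
    have htpos : 0 < t := Finset.sum_pos (fun j _ => hαpos j) Finset.univ_nonempty
    set sc : ℂ := Complex.ofReal (Real.sqrt t⁻¹) with hscdef
    have hsc : sc * sc = Complex.ofReal t⁻¹ := by
      rw [hscdef, ← Complex.ofReal_mul, Real.mul_self_sqrt (le_of_lt (inv_pos.mpr htpos))]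
    set K : Fin J → Matrix (Fin d) (Fin s) ℂ := fun j => sc • ((A j)ᴴ * q) with hK
    have hKH : ∀ j, (K j)ᴴ = sc • (q * A j) := by
      intro j
      rw [hK]
      rw [Matrix.conjTranspose_smul, Matrix.conjTranspose_mul, hqH,
        Matrix.conjTranspose_conjTranspose, hscdef, Complex.star_def, Complex.conj_ofReal]
    have hKterm : ∀ j (Y : Mat s), K j * Y * (K j)ᴴ
        = Complex.ofReal t⁻¹ • ((A j)ᴴ * (q * Y * q) * A j) := by
      intro j Y
      rw [hKH j, hK]
      rw [Matrix.smul_mul, Matrix.smul_mul, Matrix.mul_smul, smul_smul, hsc]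
      congr 1
      simp only [Matrix.mul_assoc]
    refine ⟨fun X => ∑ k, S k * X * (S k)ᴴ, fun Y => ∑ j, K j * Y * (K j)ᴴ,
      t⁻¹ * ∑ j, (α j)^2, ⟨kS, S, fun X => rfl, hS⟩, ⟨J, K, fun Y => rfl, ?_⟩, ?_, ?_⟩
    · have hKjK : ∀ j, (K j)ᴴ * K j
          = Complex.ofReal t⁻¹ • (q * (A j * (A j)ᴴ) * q) := by
        intro j
        rw [hKH j, hK, Matrix.smul_mul, Matrix.mul_smul, smul_smul, hsc]
        congr 1
        simp only [Matrix.mul_assoc]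
      have hsumK : ∑ j, (K j)ᴴ * K j
          = Complex.ofReal t⁻¹ • (q * (∑ j, A j * (A j)ᴴ) * q) := by
        rw [Finset.sum_congr rfl fun j _ => hKjK j, ← Finset.smul_sum]
        congr 1
        rw [Matrix.mul_sum, Matrix.sum_mul]
      set P : Mat s := ∑ j, ((α j : ℂ) • (1 : Mat s) - A j * (A j)ᴴ) with hP
      have hPpsd : P.PosSemidef :=
        posSemidef_sum _ fun j => shrink_aux (A j) (α j) (le_of_lt (hαpos j)) (hAA j)
      have hAsum : ∑ j, A j * (A j)ᴴ = (t:ℂ) • (1 : Mat s) - P := by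
        rw [hP, Finset.sum_sub_distrib]
        have e : ∑ j, ((α j : ℂ) • (1 : Mat s)) = (t:ℂ) • (1 : Mat s) := by
          rw [← Finset.sum_smul, ht]
          norm_cast
        rw [e]
        abel
      have key : (1 : Mat s) - ∑ j, (K j)ᴴ * K j
          = (1 - R) + Complex.ofReal t⁻¹ • (q * P * q) := by
        rw [hsumK, hAsum, Matrix.mul_sub, Matrix.sub_mul, smul_sub]
        have e1 : q * ((t:ℂ) • (1 : Mat s)) * q = (t:ℂ) • R := by
          rw [Matrix.mul_smul, Matrix.mul_one, Matrix.smul_mul, hqq]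
        rw [e1, smul_smul]
        have e2 : (Complex.ofReal t⁻¹) * (t:ℂ) = 1 := by
          rw [← Complex.ofReal_mul, inv_mul_cancel₀ (ne_of_gt htpos)]
          simp
        rw [e2, one_smul]
        abel
      rw [key]
      refine hR1.add (posSemidef_smul_real ?_ (le_of_lt (inv_pos.mpr htpos)))
      have := hPpsd.mul_mul_conjTranspose_same q
      rwa [hqH] at this
    · exact mul_pos (inv_pos.mpr htpos)
        (Finset.sum_pos (fun j _ => pow_pos (hαpos j) 2) Finset.univ_nonempty)
    · intro X
      show ∑ j, K j * (E (∑ k, S k * X * (S k)ᴴ)) * (K j)ᴴ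
          = ((t⁻¹ * ∑ j, (α j)^2 : ℝ) : ℂ) • X
      have hqYq : q * (E (∑ k, S k * X * (S k)ᴴ)) * q = ∑ j', A j' * X * (A j')ᴴ := by
        rw [hEk, ← hsum X]
        simp only [Matrix.mul_sum, Matrix.sum_mul, Matrix.mul_assoc]
      have step : ∀ j, (A j)ᴴ * (∑ j', A j' * X * (A j')ᴴ) * A j
          = (((α j)^2 : ℝ) : ℂ) • X := by
        intro j
        rw [Matrix.mul_sum, Matrix.sum_mul]
        rw [Finset.sum_eq_single j (fun j' _ hne => ?_)
          (fun h => absurd (Finset.mem_univ j) h)]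
        · have e : (A j)ᴴ * (A j * X * (A j)ᴴ) * A j
              = ((A j)ᴴ * A j) * X * ((A j)ᴴ * A j) := by
            simp only [Matrix.mul_assoc]
          rw [e, hAA j]
          simp only [Matrix.smul_mul, Matrix.mul_smul, Matrix.one_mul, Matrix.mul_one,
            smul_smul]
          congr 1
          push_cast
          ring
        · have h0 : (A j)ᴴ * A j' = 0 := horth j' j hne
          calc (A j)ᴴ * (A j' * X * (A j')ᴴ) * A j
              = ((A j)ᴴ * A j') * (X * ((A j')ᴴ * A j)) := by
                simp only [Matrix.mul_assoc]
            _ = 0 := by rw [h0, Matrix.zero_mul]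
      calc ∑ j, K j * (E (∑ k, S k * X * (S k)ᴴ)) * (K j)ᴴ
          = ∑ j, Complex.ofReal t⁻¹ •
              ((A j)ᴴ * (q * (E (∑ k, S k * X * (S k)ᴴ)) * q) * A j) :=
            Finset.sum_congr rfl fun j _ => hKterm j _
        _ = ∑ j, Complex.ofReal t⁻¹ • ((((α j)^2 : ℝ) : ℂ) • X) := by
            refine Finset.sum_congr rfl fun j _ => ?_
            rw [hqYq, step j]
        _ = ((t⁻¹ * ∑ j, (α j)^2 : ℝ) : ℂ) • X := by
            simp only [smul_smul]
            rw [← Finset.sum_smul]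
            congr 1
            push_cast
            rw [Finset.mul_sum]
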